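/- The TR-BDF2 method with γ = 1 − √2/2 is A-stable: its stability function R(z) satisfies |R(z)| ≤ 1 for all z with Re z ≤ 0. -/

import Mathlib

private lemma trbdf2_aux (s x y : ℝ) (hs : s^2 = 2) (h1 : 1 < s) (h2 : s < 3/2)
    (hx : x ≤ 0) :
    (1 + (s-1)*x)^2 + (s-1)^2*y^2 ≤ ((1-(1-s/2)*x)^2 + (1-s/2)^2*y^2)^2 := by
  set g : ℝ := 1 - s/2 with hg
  have hgpos : 0 < g := by simp only [hg]; linarith
  have ha2 : (s-1)^2 = 2*g^2 := by simp only [hg]; linear_combination hs/2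
  set u : ℝ := (1 - g*x)^2 with hu'
  have hu : 1 ≤ u := by
    have : 0 ≤ g * (-x) := mul_nonneg hgpos.le (by linarith)
    nlinarith
  have hle : 1 + (s-1)*x ≤ u := by nlinarith [mul_nonneg (sub_nonneg.mpr h1.le) (neg_nonneg.mpr hx), mul_nonneg hgpos.le (neg_nonneg.mpr hx), sq_nonneg (g*x)]
  have hge : -u ≤ 1 + (s-1)*x := by nlinarith [mul_nonneg (by linarith : (0:ℝ) ≤ 3 - 2*s) (neg_nonneg.mpr hx), sq_nonneg (g*x)]
  have hkey : (1 + (s-1)*x)^2 ≤ u^2 := sq_le_sq' hge hle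
  have h3 : 0 ≤ (g*y)^2 * (u - 1) := mul_nonneg (sq_nonneg _) (by linarith)
  have h4 : 0 ≤ ((g*y)^2)^2 := sq_nonneg _
  have hrhs : ((1-(1-s/2)*x)^2 + (1-s/2)^2*y^2)^2 = u^2 + 2*u*(g*y)^2 + ((g*y)^2)^2 := by
    simp only [hu', hg]; ring
  rw [hrhs, ha2]
  nlinarith [hkey, h3, h4]

theorem trbdf2_A_stable :
    let γ : ℝ := 1 - Real.sqrt 2 / 2
    let γ₃ : ℝ := (1 - γ) / (2*γ)
    ∀ z : ℂ, z.re ≤ 0 →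
      ‖(((1 - (γ₃:ℂ)) * (1 - (γ:ℂ)*z) + (γ₃:ℂ) * (1 + (γ:ℂ)*z)) /
        ((1 - (γ:ℂ)*z)^2))‖ ≤ 1 := by
  intro γ γ₃ z hz
  have hs2 : Real.sqrt 2 ^ 2 = 2 := Real.sq_sqrt (by norm_num)
  have hs2nn : 0 ≤ Real.sqrt 2 := Real.sqrt_nonneg 2
  have hs2lb : 1 < Real.sqrt 2 := by nlinarith
  have hs2ub : Real.sqrt 2 < 3/2 := by nlinarith
  have hγ : γ = 1 - Real.sqrt 2 / 2 := rfl
  have hγpos : (0:ℝ) < γ := by rw [hγ]; linarith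
  have hγ₃ : γ₃ = (Real.sqrt 2 + 1) / 2 := by
    simp only [γ₃, γ]
    rw [div_eq_div_iff (by nlinarith) (by norm_num)]
    nlinarith
  set x := z.re with hx
  set y := z.im with hy
  have hre : (1 - (γ:ℂ)*z).re = 1 - γ * x := by simp [← hx]
  have hB1 : (1:ℝ) ≤ ‖(1 - (γ:ℂ)*z)‖ := by
    calc (1:ℝ) ≤ 1 - γ * x := by nlinarith
    _ = (1 - (γ:ℂ)*z).re := hre.symm
    _ ≤ |(1 - (γ:ℂ)*z).re| := le_abs_self _
    _ ≤ ‖(1 - (γ:ℂ)*z)‖ := Complex.abs_re_le_norm _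
  have hsc : ((Real.sqrt 2 : ℝ) : ℂ)^2 = 2 := by exact_mod_cast congrArg Complex.ofReal hs2
  have hnum : ((1:ℂ) - (γ₃:ℂ)) * (1 - (γ:ℂ)*z) + (γ₃:ℂ) * (1 + (γ:ℂ)*z)
      = 1 + ((Real.sqrt 2 - 1 : ℝ) : ℂ) * z := by
    rw [hγ₃, hγ]
    push_cast
    linear_combination (-(z/2)) * hsc
  rw [norm_div, norm_pow, div_le_one (by nlinarith), hnum]
  set A := ‖(1 + ((Real.sqrt 2 - 1 : ℝ) : ℂ) * z)‖ with hA
  set B := ‖(1 - (γ:ℂ)*z)‖ with hB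
  have hAnn : 0 ≤ A := norm_nonneg _
  have key : A^2 ≤ (B^2)^2 := by
    have eA : A^2 = Complex.normSq (1 + ((Real.sqrt 2 - 1 : ℝ) : ℂ) * z) := Complex.sq_norm _
    have eB : B^2 = Complex.normSq (1 - (γ:ℂ)*z) := Complex.sq_norm _
    rw [eA, eB]
    simp only [Complex.normSq_apply, Complex.add_re, Complex.add_im, Complex.mul_re,
      Complex.mul_im, Complex.sub_re, Complex.sub_im, Complex.one_re, Complex.one_im,
      Complex.ofReal_re, Complex.ofReal_im, ← hx, ← hy]
    have haux := trbdf2_aux (Real.sqrt 2) x y hs2 hs2lb hs2ub hz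
    rw [hγ]
    nlinarith [haux]
  nlinarith [sq_nonneg B, hB1, key, hAnn]
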